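/- arXiv:1401.3757 — 2 statements merged into one kernel-verified Lean document; each statement's English description precedes it below -/
import Mathlib

section
/- Let 𝒞 be a small category and c an object of 𝒞. The functor from the slice category Cat/𝒞 to Cat, sending an object (𝒟, F : 𝒟 ⥤ 𝒞) to the comma category c/F and a morphism over 𝒞 to the induced functor of comma categories, admits a right adjoint; consequently it preserves all (small) colimits. -/
open CategoryTheory Limits Simplicial Opposite

noncomputable section
namespace MV

/-- `Ab` is the category of abelian groups. -/
abbrev Ab := AddCommGrpCat.{0}

/-! ### Induced functors on comma categories

Given `G : D ⥤ E` commuting with functors `H : D ⥤ C`, `K : E ⥤ C` over `C`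
(i.e. `G ⋙ K = H`) and `c : C`, we get an induced functor `c/H ⥤ c/K` on
comma (under) categories, `(d, φ : c ⟶ H d) ↦ (G d, φ)`. -/
def commaMap {D E C : Type} [SmallCategory D] [SmallCategory E] [SmallCategory C]
    (G : D ⥤ E) {H : D ⥤ C} {K : E ⥤ C} (w : G ⋙ K = H) (c : C) :
    StructuredArrow c H ⥤ StructuredArrow c K where
  obj X := StructuredArrow.mk
    (Y := G.obj X.right) (X.hom ≫ eqToHom (by subst w; rfl))
  map {X Y} g := StructuredArrow.homMk (G.map g.right) (by
    subst w
    simpa using g.w)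
  map_id X := by
    apply CommaMorphism.ext <;> simp
  map_comp f g := by
    apply CommaMorphism.ext <;> simp

/-- The functor `Cat/𝒞 ⥤ Cat` sending `F : 𝒟 ⥤ 𝒞` to the comma category `c/F`. -/
def commaFunctor (C : Type) [SmallCategory C] (c : C) : Over (Cat.of C) ⥤ Cat.{0,0} where
  obj X := Cat.of (StructuredArrow (show Cat.of C from c) X.hom.toFunctor)
  map {X Y} f := ⟨@commaMap X.left Y.left (Cat.of C) _ _ (Cat.of C).str f.left.toFunctor
    X.hom.toFunctor Y.hom.toFunctor (congrArg Cat.Hom.toFunctor (Over.w f))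
    (show Cat.of C from c)⟩
  map_id X := by
    generalize (show Cat.of C from c) = c'
    exact Cat.ext <| CategoryTheory.Functor.ext (fun Y => by
      simp only [commaMap, eqToHom_refl, Category.comp_id, Cat.Hom.id_obj]
      exact (StructuredArrow.eq_mk Y).symm) (fun A B g => by
      apply StructuredArrow.hom_ext
      erw [StructuredArrow.comp_right, StructuredArrow.comp_right, StructuredArrow.eqToHom_right,
        StructuredArrow.eqToHom_right, Functor.id_map]
      conv_rhs => erw [eqToHom_refl, eqToHom_refl, Category.id_comp, Category.comp_id]
      rfl)
  map_comp {X Y Z} f g := by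
    generalize (show Cat.of C from c) = c'
    exact Cat.ext <| CategoryTheory.Functor.ext (fun W => by
      exact congrArg StructuredArrow.mk (by erw [Category.assoc, eqToHom_trans]; rfl)) (fun A B h => by
      apply StructuredArrow.hom_ext
      erw [StructuredArrow.comp_right, StructuredArrow.comp_right, StructuredArrow.eqToHom_right,
        StructuredArrow.eqToHom_right, Functor.comp_map, eqToHom_refl, eqToHom_refl, Category.id_comp,
        Category.comp_id]
      rfl)

section Aux

variable {C : Type} [SmallCategory C] (c : C)

structure LaxO (X : Type) [SmallCategory X] where
  pt : C
  φ : (c ⟶ pt) → X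

variable {X : Type} [SmallCategory X]

structure LaxH (P Q : LaxO c X) where
  f : P.pt ⟶ Q.pt
  t : ∀ h : c ⟶ P.pt, P.φ h ⟶ Q.φ (h ≫ f)

instance : CategoryStruct (LaxO c X) where
  Hom := LaxH c
  id P := ⟨𝟙 _, fun h => eqToHom (by rw [Category.comp_id])⟩
  comp {P Q R} α β := ⟨α.f ≫ β.f, fun h => α.t h ≫ β.t (h ≫ α.f) ≫ eqToHom (by rw [Category.assoc])⟩

@[simp] lemma id_f (P : LaxO c X) : LaxH.f (𝟙 P) = 𝟙 P.pt := rfl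
@[simp] lemma comp_f {P Q R : LaxO c X} (α : P ⟶ Q) (β : Q ⟶ R) :
    (α ≫ β).f = α.f ≫ β.f := rfl
lemma id_t (P : LaxO c X) (h : c ⟶ P.pt) :
    LaxH.t (𝟙 P) h = eqToHom (by simp) := rfl
lemma comp_t {P Q R : LaxO c X} (α : P ⟶ Q) (β : Q ⟶ R) (h : c ⟶ P.pt) :
    (α ≫ β).t h = α.t h ≫ β.t (h ≫ α.f) ≫ eqToHom (by simp) := rfl

lemma LaxH.ext' {P Q : LaxO c X} {α β : P ⟶ Q} (hf : α.f = β.f)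
    (ht : ∀ h, HEq (α.t h) (β.t h)) : α = β := by
  obtain ⟨f, t⟩ := α; obtain ⟨f', t'⟩ := β
  obtain rfl : f = f' := hf
  exact congrArg (LaxH.mk f) (funext fun h => eq_of_heq (ht h))

lemma t_heq {P Q : LaxO c X} (α : P ⟶ Q) {h h' : c ⟶ P.pt} (e : h = h') :
    HEq (LaxH.t α h) (LaxH.t α h') := by subst e; rfl

lemma eqToHom_heq {a b a' b' : X} (p : a = b) (q : a' = b') (e : a = a') :
    HEq (eqToHom p) (eqToHom q) := by subst p; subst e; subst q; rfl

instance : Category (LaxO c X) where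
  id_comp {P Q} α := by
    refine LaxH.ext' c (by simp) (fun h => ?_)
    rw [comp_t, id_t]
    simp only [eqToHom_comp_heq_iff, comp_eqToHom_heq_iff, id_f]
    exact t_heq c α (by simp)
  comp_id {P Q} α := by
    refine LaxH.ext' c (by simp) (fun h => ?_)
    rw [comp_t, id_t]
    simp only [eqToHom_trans, comp_eqToHom_heq_iff]
    exact HEq.rfl
  assoc {P Q R S} α β γ := by
    refine LaxH.ext' c (by simp) (fun h => ?_)
    rw [comp_t, comp_t, comp_t, comp_t]
    simp only [comp_f, Category.assoc, eqToHom_trans, comp_eqToHom_heq_iff]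
    refine heq_comp rfl rfl (by simp) HEq.rfl (heq_comp rfl rfl (by simp) HEq.rfl ?_)
    refine ((eqToHom_comp_heq _ _).trans ?_)
    exact heq_comp (by simp) (by simp) (by simp) (t_heq c γ (by simp)) (eqToHom_heq _ _ (by simp))

/-- Projection to `C`. -/
def laxProj : LaxO c X ⥤ C where
  obj P := P.pt
  map α := α.f

/-- Functoriality of the lax comma category in `X`. -/
def laxMap {Y : Type} [SmallCategory Y] (k : X ⥤ Y) : LaxO c X ⥤ LaxO c Y where
  obj P := ⟨P.pt, fun h => k.obj (P.φ h)⟩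
  map {P Q} α := ⟨α.f, fun h => k.map (α.t h)⟩
  map_id P := by
    refine LaxH.ext' c rfl (fun h => ?_)
    refine heq_of_eq ?_
    show k.map (LaxH.t (𝟙 P) h) = _
    rw [id_t, id_t, eqToHom_map]
  map_comp {P Q R} α β := by
    refine LaxH.ext' c rfl (fun h => ?_)
    refine heq_of_eq ?_
    show k.map ((α ≫ β).t h) = _
    rw [comp_t]
    simp [eqToHom_map]
    rfl

variable (X) in
/-- The right adjoint on objects. -/
def laxObj : Over (Cat.of C) := Over.mk (Y := Cat.of (LaxO c X)) (laxProj c : LaxO c X ⥤ C).toCatHom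

/-- The right adjoint functor `Cat ⥤ Cat/C`. -/
def laxFunctor (C : Type) [SmallCategory C] (c : C) : Cat.{0,0} ⥤ Over (Cat.of C) where
  obj X := laxObj c X
  map {X Y} k := Over.homMk (laxMap c k.toFunctor).toCatHom
    (Cat.ext <| CategoryTheory.Functor.ext (fun P => rfl) (fun P Q α => by
      erw [eqToHom_refl, Category.comp_id, Category.id_comp]; rfl))
  map_id X := by
    apply CommaMorphism.ext
    · rfl
    · rfl
  map_comp {X Y Z} k l := by
    apply CommaMorphism.ext
    · rfl
    · rfl

lemma t_hcongr {P Q : LaxO c X} {α β : P ⟶ Q} (e : α = β) (h : c ⟶ P.pt) :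
    HEq (LaxH.t α h) (LaxH.t β h) := by subst e; rfl

lemma t_congr' {P Q : LaxO c X} (α : P ⟶ Q) {h h' : c ⟶ P.pt} (e : h = h') :
    LaxH.t α h' = eqToHom (by rw [e]) ≫ LaxH.t α h ≫ eqToHom (by rw [e]) := by
  subst e; simp

lemma map_heq {Y : Type} [SmallCategory Y] (H : X ⥤ Y) {a b a' b' : X}
    (ea : a = a') (eb : b = b') {f : a ⟶ b} {g : a' ⟶ b'} (hf : HEq f g) :
    HEq (H.map f) (H.map g) := by
  subst ea; subst eb; rw [eq_of_heq hf]

/-- The structure functor of an object of `Cat/C`, as a functor to `C`. -/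
def dF (D : Over (Cat.of C)) : D.left ⥤ C := D.hom.toFunctor

/-- The underlying functor of a morphism to `laxObj c X`. -/
def uF {D : Over (Cat.of C)} (u : D ⟶ laxObj c X) : D.left ⥤ LaxO c X := u.left.toFunctor

section Unlax

variable {D : Over (Cat.of C)} (u : D ⟶ laxObj c X)

lemma unlax_e (d : D.left) : (dF D).obj d = ((uF c u).obj d).pt :=
  (Functor.congr_obj (congrArg Cat.Hom.toFunctor (Over.w u)) d).symm

lemma unlax_f {d d' : D.left} (g : d ⟶ d') :
    ((uF c u).map g).f
      = eqToHom (unlax_e c u d).symm ≫ (dF D).map g ≫ eqToHom (unlax_e c u d') := by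
  have := Functor.congr_hom (congrArg Cat.Hom.toFunctor (Over.w u)) g
  exact this

lemma unlax_arg {W W' : StructuredArrow c (dF D)} (g : W ⟶ W') :
    (W.hom ≫ eqToHom (unlax_e c u W.right)) ≫ ((uF c u).map g.right).f
      = W'.hom ≫ eqToHom (unlax_e c u W'.right) := by
  rw [Category.assoc, unlax_f c u g.right]
  simp only [eqToHom_trans_assoc, eqToHom_refl, Category.id_comp]
  rw [StructuredArrow.w_assoc g]

/-- The inverse of the hom-equivalence. -/
def unlax : StructuredArrow c (dF D) ⥤ X where
  obj W := ((uF c u).obj W.right).φ (W.hom ≫ eqToHom (unlax_e c u W.right))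
  map {W W'} g := ((uF c u).map g.right).t (W.hom ≫ eqToHom (unlax_e c u W.right)) ≫
    eqToHom (congrArg _ (unlax_arg c u g))
  map_id W := by
    refine eq_of_heq ((comp_eqToHom_heq _ _).trans
      ((t_hcongr c (CategoryTheory.Functor.map_id (uF c u) W.right) _).trans ?_))
    rw [id_t]
    exact (eqToHom_heq _ rfl rfl).trans (heq_of_eq (eqToHom_refl _ _))
  map_comp {W W' W''} g g' := by
    refine eq_of_heq ((comp_eqToHom_heq _ _).trans
      ((t_hcongr c (CategoryTheory.Functor.map_comp (uF c u) g.right g'.right) _).trans ?_))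
    rw [comp_t]
    refine heq_comp rfl (congrArg _ (unlax_arg c u g)) ?_ (comp_eqToHom_heq _ _).symm ?_
    · congr 1
      rw [comp_f, ← Category.assoc, unlax_arg c u g, unlax_arg c u g']
    · exact (comp_eqToHom_heq _ _).trans
        ((t_heq c ((uF c u).map g'.right) (unlax_arg c u g)).trans (comp_eqToHom_heq _ _).symm)

end Unlax

lemma comp_eqToHom_eq {a b : C} (e : a = b) (h : c ⟶ a) (h' : c ⟶ b) (hh : HEq h h') :
    h ≫ eqToHom e = h' := by subst e; simpa using eq_of_heq hh

lemma laxO_eq (P : LaxO c X) (a : C) (e : a = P.pt) :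
    LaxO.mk a (fun h => P.φ (h ≫ eqToHom e)) = P := by
  cases P; cases e; simp

lemma laxH_hext {P Q P' Q' : LaxO c X} (eP : P = P') (eQ : Q = Q') (α : P ⟶ Q) (β : P' ⟶ Q')
    (hf : HEq α.f β.f)
    (ht : ∀ (h : c ⟶ P.pt) (h' : c ⟶ P'.pt), HEq h h' → HEq (α.t h) (β.t h')) : HEq α β := by
  subst eP; subst eQ
  exact heq_of_eq (LaxH.ext' c (eq_of_heq hf) (fun h => ht h h HEq.rfl))

lemma sa_hom_heq {E : Type} [SmallCategory E] {F : E ⥤ C} {A B A' B' : StructuredArrow c F}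
    (eA : A = A') (eB : B = B') (f : A ⟶ B) (g : A' ⟶ B') (hr : HEq f.right g.right) :
    HEq f g := by
  subst eA; subst eB
  exact heq_of_eq (StructuredArrow.hom_ext f g (eq_of_heq hr))

section Tolax

variable {D : Over (Cat.of C)} (H : (StructuredArrow c (dF D)) ⥤ X)

/-- The underlying functor of the forward hom-equivalence. -/
def tolaxFun : (D.left : Cat) ⥤ LaxO c X where
  obj d := ⟨(dF D).obj d, fun h => H.obj (StructuredArrow.mk h)⟩
  map {d d'} g := ⟨(dF D).map g, fun h => H.map (StructuredArrow.homMk g rfl)⟩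
  map_id d := by
    refine LaxH.ext' c (by simp) (fun h => ?_)
    rw [id_t]
    have e : (StructuredArrow.mk (h ≫ (dF D).map (𝟙 d)) :
        StructuredArrow c (dF D)) = StructuredArrow.mk h := by simp
    have step : (StructuredArrow.homMk (𝟙 d) rfl :
        StructuredArrow.mk h ⟶ StructuredArrow.mk (h ≫ (dF D).map (𝟙 d))) = eqToHom e.symm :=
      StructuredArrow.hom_ext _ _ (by simp)
    exact (heq_of_eq ((congrArg H.map step).trans (eqToHom_map H e.symm))).trans
      (eqToHom_heq _ _ rfl)
  map_comp {d d' d''} g g' := by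
    refine LaxH.ext' c (by simp) (fun h => ?_)
    rw [comp_t]
    have eb : (StructuredArrow.mk (h ≫ (dF D).map (g ≫ g')) :
        StructuredArrow c (dF D))
        = StructuredArrow.mk ((h ≫ (dF D).map g) ≫ (dF D).map g') := by simp
    refine HEq.trans (b := H.map ((StructuredArrow.homMk g rfl :
        StructuredArrow.mk h ⟶ StructuredArrow.mk (h ≫ (dF D).map g)) ≫
        (StructuredArrow.homMk g' rfl : StructuredArrow.mk (h ≫ (dF D).map g) ⟶ StructuredArrow.mk ((h ≫ (dF D).map g) ≫ (dF D).map g')))) ?_ ?_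
    · exact map_heq H rfl eb (sa_hom_heq c rfl eb _ _ (by simp))
    · rw [H.map_comp]
      refine heq_comp rfl rfl (congrArg H.obj (by simp)) HEq.rfl ?_
      exact HEq.trans (b := H.map (StructuredArrow.homMk g' rfl : StructuredArrow.mk (h ≫ (dF D).map g) ⟶
        StructuredArrow.mk ((h ≫ (dF D).map g) ≫ (dF D).map g'))) HEq.rfl (comp_eqToHom_heq _ _).symm

/-- The forward hom-equivalence. -/
def tolax : D ⟶ laxObj c X :=
  Over.homMk (tolaxFun c H).toCatHom (Cat.ext <| CategoryTheory.Functor.ext (fun d => rfl) (fun d d' g => by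
    erw [eqToHom_refl, Category.comp_id, Category.id_comp]; rfl))

end Tolax

section Inverse

variable {D : Over (Cat.of C)}

lemma unlax_tolax (H : (StructuredArrow c (dF D)) ⥤ X) :
    unlax c (tolax c H) = H := by
  refine CategoryTheory.Functor.hext (fun W => ?_) (fun W W' g => ?_)
  · exact congrArg H.obj (((congrArg StructuredArrow.mk
      (comp_eqToHom_eq c _ _ _ HEq.rfl))).trans (StructuredArrow.eq_mk W).symm)
  · have hx : W.hom ≫ eqToHom (unlax_e c (tolax c H) W.right) = W.hom :=
      comp_eqToHom_eq c _ _ _ HEq.rfl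
    have eA : StructuredArrow.mk (W.hom ≫ eqToHom (unlax_e c (tolax c H) W.right)) = W := by
      exact (congrArg StructuredArrow.mk hx).trans (StructuredArrow.eq_mk W).symm
    have hy : (W.hom ≫ eqToHom (unlax_e c (tolax c H) W.right)) ≫ (dF D).map g.right
        = W'.hom := by rw [hx]; exact StructuredArrow.w g
    have eB : StructuredArrow.mk ((W.hom ≫ eqToHom (unlax_e c (tolax c H) W.right)) ≫
        (dF D).map g.right) = W' :=
      (congrArg StructuredArrow.mk hy).trans (StructuredArrow.eq_mk W').symm
    refine (comp_eqToHom_heq _ _).trans ?_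
    exact map_heq H eA eB (sa_hom_heq c eA eB _ _ (heq_of_eq rfl))

lemma tolax_unlax (u : D ⟶ laxObj c X) : tolax c (unlax c u) = u := by
  apply CommaMorphism.ext
  · refine Cat.ext (CategoryTheory.Functor.hext (fun d => ?_) (fun d d' g => ?_))
    · exact laxO_eq c _ _ (unlax_e c u d)
    · refine laxH_hext c (laxO_eq c _ _ (unlax_e c u d)) (laxO_eq c _ _ (unlax_e c u d'))
        ((tolaxFun c (unlax c u)).map g) ((uF c u).map g) (((conj_eqToHom_iff_heq' _ _ _ _).1 (unlax_f c u g)).symm) (fun h h' hh => ?_)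
      exact (comp_eqToHom_heq _ _).trans
        (t_heq c ((uF c u).map g) (comp_eqToHom_eq c _ h h' hh))
  · rfl

end Inverse


/-- The adjunction. -/
def laxAdj (C : Type) [SmallCategory C] (c : C) : commaFunctor C c ⊣ laxFunctor C c :=
  Adjunction.mkOfHomEquiv
    { homEquiv := fun D X =>
        { toFun := fun H => tolax c H.toFunctor
          invFun := fun u => (unlax c u).toCatHom
          left_inv := fun H => Cat.ext (unlax_tolax c H.toFunctor)
          right_inv := fun u => tolax_unlax c u }
      homEquiv_naturality_left_symm := fun {D' D X} m u => by
        refine Cat.ext (CategoryTheory.Functor.hext (fun W => ?_) (fun W W' g => ?_))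
        · show ((uF c u).obj (m.left.toFunctor.obj W.right)).φ
            (W.hom ≫ eqToHom (unlax_e c (m ≫ u) W.right)) = _
          exact congrArg _ (by simp [commaFunctor, commaMap, eqToHom_trans]; erw [StructuredArrow.mk_hom_eq_self, Category.assoc, eqToHom_trans])
        · refine (comp_eqToHom_heq _ _).trans (HEq.trans ?_ (comp_eqToHom_heq _ _).symm)
          exact t_heq c _ (by simp [commaFunctor, commaMap, eqToHom_trans]; erw [StructuredArrow.mk_hom_eq_self, Category.assoc, eqToHom_trans]; rfl)
      homEquiv_naturality_right := fun {D X Y} H k => rfl }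

end Aux

/-- For a small category `C` and `c : C`, the functor `Cat/𝒞 ⥤ Cat`,
`(𝒟, F : 𝒟 ⥤ 𝒞) ↦ c/F`, admits a right adjoint; consequently it preserves all small
colimits. -/
theorem commaFunctor_isLeftAdjoint (C : Type) [SmallCategory C] (c : C) :
    (commaFunctor C c).IsLeftAdjoint ∧ Nonempty (PreservesColimits (commaFunctor C c)) := by
  exact ⟨⟨laxFunctor C c, ⟨laxAdj C c⟩⟩, ⟨(laxAdj C c).leftAdjoint_preservesColimits⟩⟩

end MV
end
end

section
/- Let F : 𝒟 ⥤ 𝒞 be a functor between small categories and let n ≥ 0. The right 𝒞-module sending an object c to the free abelian group on the set of n-simplices of the nerve of the comma category c/F (with contravariant functoriality in c induced by the functors c/F ⥤ c′/F) is a projective object of the functor category 𝒞ᵒᵖ ⥤ Ab. -/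
open CategoryTheory Limits Simplicial Opposite

noncomputable section
namespace MV

/-! ### The chain complex of right `C`-modules `ℤN(−/F)` -/

variable {D C : Type} [SmallCategory D] [SmallCategory C]

/-- The functor `Cᵒᵖ ⥤ Cat` sending `c` to the comma category `c/F`. -/
def underCat (F : D ⥤ C) : Cᵒᵖ ⥤ Cat.{0,0} where
  obj c := Cat.of (StructuredArrow c.unop F)
  map f := (StructuredArrow.map f.unop).toCatHom
  map_id c := Cat.ext (CategoryTheory.Functor.ext (fun X => StructuredArrow.map_id)
    (fun X Y f => by
      apply StructuredArrow.hom_ext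
      erw [StructuredArrow.comp_right, StructuredArrow.comp_right,
        StructuredArrow.eqToHom_right, StructuredArrow.eqToHom_right]
      simp [StructuredArrow.map, Comma.mapLeft]
      rfl))
  map_comp f g := Cat.ext (CategoryTheory.Functor.ext (fun X => StructuredArrow.map_comp)
    (fun X Y f => by
      apply StructuredArrow.hom_ext
      erw [StructuredArrow.comp_right, StructuredArrow.comp_right,
        StructuredArrow.eqToHom_right, StructuredArrow.eqToHom_right]
      simp [StructuredArrow.map, Comma.mapLeft]
      rfl))

/-- The functor `Cᵒᵖ ⥤ SSet` sending `c` to the nerve `N(c/F)`. -/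
def underSSet (F : D ⥤ C) : Cᵒᵖ ⥤ SSet.{0} := underCat F ⋙ nerveFunctor

/-- `c ↦ ℤN(c/F)`, the free simplicial abelian group on the nerve of `c/F`. -/
def underSAb (F : D ⥤ C) : Cᵒᵖ ⥤ SimplicialObject Ab :=
  underSSet F ⋙ (Functor.whiskeringRight SimplexCategoryᵒᵖ (Type 0) Ab).obj AddCommGrpCat.free

/-- The chain complex of right `C`-modules `ℤN(−/F)`: at an object `c` and in degree `n`
it is the free abelian group on the `n`-simplices of the nerve of `c/F`, with
differentials the alternating sums of face maps. -/
def ZNerve (F : D ⥤ C) : ChainComplex (Cᵒᵖ ⥤ Ab) ℕ :=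
  (AlgebraicTopology.alternatingFaceMapComplex (Cᵒᵖ ⥤ Ab)).obj (underSAb F).flip


/-! ### Auxiliary material for the proof -/

/-- The presheaf of sets `c ↦ (n-simplices of the nerve of c/F)`. -/
def SF (F : D ⥤ C) (n : ℕ) : Cᵒᵖ ⥤ Type :=
  underSSet F ⋙ (evaluation SimplexCategoryᵒᵖ (Type 0)).obj (op ⦋n⦌)

/-- The universal `n`-simplex of the nerve of `F(d₀)/F` associated to a string `σ` in `D`
starting at `d₀`. -/
def univ (F : D ⥤ C) {n : ℕ} (σ : ComposableArrows D n) :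
    ComposableArrows (StructuredArrow (F.obj (σ.obj 0)) F) n :=
  σ.toStructuredArrow (F.obj (σ.obj 0)) F
    (fun i => F.map (σ.map (homOfLE (Fin.zero_le i))))
    (fun {_ _} g => by
      rw [← F.map_comp, ← σ.map_comp]
      exact congrArg (F.map ∘ σ.map) (Subsingleton.elim _ _))

lemma eq_toStructuredArrow (F : D ⥤ C) {c : C} {n : ℕ}
    (s : ComposableArrows (StructuredArrow c F) n) :
    s = (s ⋙ StructuredArrow.proj c F).toStructuredArrow c F
      (fun i => (s.obj i).hom) (fun {_ _} g => StructuredArrow.w (s.map g)) := by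
  refine CategoryTheory.Functor.ext (fun i => rfl) (fun X Y g => ?_)
  erw [eqToHom_refl, eqToHom_refl, Category.comp_id, Category.id_comp]
  apply CommaMorphism.ext
  · subsingleton
  · rfl

lemma univ_comp_map (F : D ⥤ C) {n : ℕ} (σ : ComposableArrows D n) {c : C}
    (φ : c ⟶ F.obj (σ.obj 0)) :
    univ F σ ⋙ StructuredArrow.map φ
      = σ.toStructuredArrow c F
          (fun i => φ ≫ F.map (σ.map (homOfLE (Fin.zero_le i))))
          (fun {_ _} g => by
            rw [Category.assoc, ← F.map_comp, ← σ.map_comp]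
            exact congrArg ((φ ≫ ·) ∘ F.map ∘ σ.map) (Subsingleton.elim _ _)) := rfl

lemma toSA_congr {n : ℕ} (G : ComposableArrows D n) (X : C) (F : D ⥤ C)
    (f f' : (Y : Fin (n + 1)) → X ⟶ F.obj (G.obj Y)) (hf : ∀ Y, f Y = f' Y)
    (h : ∀ {Y Z : Fin (n + 1)} (g : Y ⟶ Z), f Y ≫ F.map (G.map g) = f Z)
    (h' : ∀ {Y Z : Fin (n + 1)} (g : Y ⟶ Z), f' Y ≫ F.map (G.map g) = f' Z) :
    G.toStructuredArrow X F f @h = G.toStructuredArrow X F f' @h' := by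
  have : f = f' := funext hf
  subst this
  rfl

/-- Every `n`-simplex of the nerve of `c/F` is the pullback of a universal simplex. -/
lemma decomp (F : D ⥤ C) {n : ℕ} {c : C} (s : ComposableArrows (StructuredArrow c F) n) :
    s = univ F (s ⋙ StructuredArrow.proj c F) ⋙ StructuredArrow.map (s.obj 0).hom := by
  erw [univ_comp_map]
  conv_lhs => rw [eq_toStructuredArrow F s]
  exact toSA_congr _ _ _ _ _
    (fun i => (StructuredArrow.w (s.map (homOfLE (Fin.zero_le i)))).symm) _ _

/-- The presheaf of sets of `n`-simplices of the nerves of comma categories is projective. -/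
lemma projSF (F : D ⥤ C) (n : ℕ) : Projective (SF F n) := by
  constructor
  intro M N f e he
  have surj : ∀ (c : Cᵒᵖ), Function.Surjective (e.app c) := by
    intro c
    rw [← CategoryTheory.epi_iff_surjective]
    infer_instance
  choose lift hlift using surj
  refine ⟨⟨fun c => TypeCat.ofHom fun (s : ComposableArrows (StructuredArrow c.unop F) n) =>
      M.map ((s.obj 0).hom).op
        (lift _ (f.app _ (univ F (s ⋙ StructuredArrow.proj c.unop F)))), ?_⟩, ?_⟩
  · intro c c' ψ
    refine ConcreteCategory.hom_ext _ _ (fun s => ?_)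
    show M.map (((s ⋙ StructuredArrow.map ψ.unop).obj 0).hom).op
        (lift _ (f.app _
          (univ F ((s ⋙ StructuredArrow.map ψ.unop) ⋙ StructuredArrow.proj c'.unop F))))
      = M.map ψ (M.map ((s.obj 0).hom).op
        (lift _ (f.app _ (univ F (s ⋙ StructuredArrow.proj c.unop F)))))
    rw [← FunctorToTypes.map_comp_apply]
    rfl
  · ext c s
    show e.app c (M.map ((s.obj 0).hom).op (lift _ _)) = f.app c s
    have h1 := NatTrans.naturality_apply e ((s.obj 0).hom).op
      (lift _ (f.app _ (univ F (s ⋙ StructuredArrow.proj c.unop F))))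
    dsimp at h1
    erw [h1, hlift]
    have h2 := NatTrans.naturality_apply f ((s.obj 0).hom).op
      (univ F (s ⋙ StructuredArrow.proj c.unop F))
    dsimp at h2
    erw [← h2]
    exact congrArg (f.app c) (decomp F s).symm

instance : (forget Ab).PreservesEpimorphisms := by
  constructor
  intro X Y g hg
  rw [CategoryTheory.epi_iff_surjective]
  exact (AddCommGrpCat.epi_iff_surjective g).mp hg

instance : ((Functor.whiskeringRight Cᵒᵖ Ab (Type 0)).obj (forget Ab)).PreservesEpimorphisms := by
  constructor
  intro M N f hf
  have h : ∀ c, Epi ((((Functor.whiskeringRight Cᵒᵖ Ab (Type 0)).obj (forget Ab)).map f).app c) := by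
    intro c
    show Epi ((forget Ab).map (f.app c))
    have : Epi (f.app c) := inferInstance
    infer_instance
  exact NatTrans.epi_of_epi_app _

/-- **Statement 6.** For a functor `F : D ⥤ C` between small categories, the right
`C`-module `c ↦ ℤ[n-simplices of the nerve of c/F]` is a projective object of `Cᵒᵖ ⥤ Ab`. -/
theorem zNerve_degreewise_projective
    {D C : Type} [SmallCategory D] [SmallCategory C] (F : D ⥤ C) (n : ℕ) :
    Projective ((ZNerve F).X n) :=
  (AddCommGrpCat.adj.whiskerRight Cᵒᵖ).map_projective (SF F n) (projSF F n)

end MV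
end
end
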